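/- For c real and n ≥ 2, the identity ∑_{j=1}^{n-1} (R_{j+1} + c R_1)² = ∑_{j=1}^n R_j², holding for all real Y_1,…,Y_n (where R_j = Y_j - Ȳ), is equivalent to (n-1)c² - 2c - 1 = 0, whose only solutions are c = 1/(√n - 1) and c = -1/(√n + 1). -/

import Mathlib

lemma key_sum (k : ℕ) (c : ℝ) (R : ℕ → ℝ)
    (hR : ∑ j ∈ Finset.range (k + 1), R j = 0) :
    ∑ j ∈ Finset.range k, (R (j + 1) + c * R 0) ^ 2
      = ∑ j ∈ Finset.range (k + 1), (R j) ^ 2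
        + ((k : ℝ) * c ^ 2 - 2 * c - 1) * (R 0) ^ 2 := by
  have h1 : ∑ j ∈ Finset.range k, R (j + 1) = - R 0 := by
    have := Finset.sum_range_succ' R k
    linarith [this, hR]
  have h2 : ∑ j ∈ Finset.range k, (R (j + 1)) ^ 2
      = ∑ j ∈ Finset.range (k + 1), (R j) ^ 2 - (R 0) ^ 2 := by
    have := Finset.sum_range_succ' (fun j => (R j) ^ 2) k
    linarith
  have expand : ∀ j, (R (j + 1) + c * R 0) ^ 2
      = (R (j + 1)) ^ 2 + (2 * c * R 0) * R (j + 1) + c ^ 2 * (R 0) ^ 2 := by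
    intro j; ring
  rw [Finset.sum_congr rfl (fun j _ => expand j)]
  rw [Finset.sum_add_distrib, Finset.sum_add_distrib, ← Finset.mul_sum,
    Finset.sum_const, Finset.card_range, nsmul_eq_mul, h1, h2]
  ring

theorem stmt_2 (n : ℕ) (hn : 2 ≤ n) (c : ℝ) :
    ((∀ Y : ℕ → ℝ,
        ∑ j ∈ Finset.range (n - 1),
            ((Y (j + 1) - (∑ i ∈ Finset.range n, Y i) / n) +
              c * (Y 0 - (∑ i ∈ Finset.range n, Y i) / n)) ^ 2 =
          ∑ j ∈ Finset.range n, (Y j - (∑ i ∈ Finset.range n, Y i) / n) ^ 2) ↔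
      ((n : ℝ) - 1) * c ^ 2 - 2 * c - 1 = 0) ∧
    (((n : ℝ) - 1) * c ^ 2 - 2 * c - 1 = 0 ↔
      c = 1 / (Real.sqrt n - 1) ∨ c = -1 / (Real.sqrt n + 1)) := by
  obtain ⟨k, rfl⟩ : ∃ k, n = k + 1 := ⟨n - 1, by omega⟩
  have hk : 1 ≤ k := by omega
  have hn0 : ((k : ℝ) + 1) ≠ 0 := by positivity
  have hcast : ((k + 1 : ℕ) : ℝ) = (k : ℝ) + 1 := by push_cast; ring
  have hzero : ∀ Y : ℕ → ℝ,
      ∑ j ∈ Finset.range (k + 1),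
        (Y j - (∑ i ∈ Finset.range (k + 1), Y i) / ((k + 1 : ℕ) : ℝ)) = 0 := by
    intro Y
    rw [Finset.sum_sub_distrib, Finset.sum_const, Finset.card_range, nsmul_eq_mul, hcast]
    field_simp
    ring
  have hfact : ∀ Y : ℕ → ℝ,
      ∑ j ∈ Finset.range (k + 1 - 1),
          ((Y (j + 1) - (∑ i ∈ Finset.range (k + 1), Y i) / ((k + 1 : ℕ) : ℝ)) +
            c * (Y 0 - (∑ i ∈ Finset.range (k + 1), Y i) / ((k + 1 : ℕ) : ℝ))) ^ 2
        = ∑ j ∈ Finset.range (k + 1),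
            (Y j - (∑ i ∈ Finset.range (k + 1), Y i) / ((k + 1 : ℕ) : ℝ)) ^ 2
          + ((k : ℝ) * c ^ 2 - 2 * c - 1) *
              (Y 0 - (∑ i ∈ Finset.range (k + 1), Y i) / ((k + 1 : ℕ) : ℝ)) ^ 2 := by
    intro Y
    simpa using key_sum k c
      (fun j => Y j - (∑ i ∈ Finset.range (k + 1), Y i) / ((k + 1 : ℕ) : ℝ)) (hzero Y)
  have heqcoef : ((k + 1 : ℕ) : ℝ) - 1 = (k : ℝ) := by push_cast; ring
  constructor
  · constructor
    · intro h
      have h1 := hfact (fun i => if i = 0 then (1 : ℝ) else 0)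
      rw [h (fun i => if i = 0 then (1 : ℝ) else 0)] at h1
      have hx := left_eq_add.mp h1
      rw [heqcoef]
      rcases mul_eq_zero.mp hx with h' | h'
      · exact h'
      · exfalso
        have h'' := (pow_eq_zero_iff two_ne_zero).mp h'
        simp [Finset.sum_ite_eq', hcast] at h''
        rw [sub_eq_zero, eq_comm, inv_eq_one] at h''
        have hk' : (1 : ℝ) ≤ (k : ℝ) := by exact_mod_cast hk
        linarith
    · intro h Y
      rw [hfact Y, heqcoef.symm] at *
      rw [h]
      ring
  · have hnn : (0 : ℝ) ≤ ((k + 1 : ℕ) : ℝ) := by positivity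
    have hs2 : Real.sqrt ((k + 1 : ℕ) : ℝ) ^ 2 = ((k + 1 : ℕ) : ℝ) := Real.sq_sqrt hnn
    set s := Real.sqrt ((k + 1 : ℕ) : ℝ) with hs
    have hs1 : 1 < s := by
      have : Real.sqrt 1 < s := by
        apply Real.sqrt_lt_sqrt (by norm_num)
        rw [hcast]
        have : (1 : ℝ) ≤ (k : ℝ) := by exact_mod_cast hk
        linarith
      simpa using this
    have hsm : s - 1 ≠ 0 := by linarith
    have hsp : s + 1 ≠ 0 := by linarith
    have hfac : (((k + 1 : ℕ) : ℝ) - 1) * c ^ 2 - 2 * c - 1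
        = ((s - 1) * c - 1) * ((s + 1) * c + 1) := by
      nlinarith [hs2]
    rw [hfac]
    constructor
    · intro h
      rcases mul_eq_zero.mp h with h' | h'
      · left; field_simp; linarith
      · right; field_simp; linarith
    · rintro (rfl | rfl)
      · have : (s - 1) * (1 / (s - 1)) - 1 = 0 := by field_simp; ring
        rw [this, zero_mul]
      · have : (s + 1) * (-1 / (s + 1)) + 1 = 0 := by field_simp; ring
        rw [this, mul_zero]
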